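/- Let K be a finite field. For finite-dimensional K-vector spaces A, B, C, there is a natural K-linear isomorphism between the space of linear maps !(A × B) → C and the space of linear maps !A → Hom(!B, C), where Hom denotes the space of K-linear maps; i.e., the coKleisli category of the ! comonad on finite-dimensional K-vector spaces is cartesian closed with exponential object Hom(!B, C). -/
import Mathlib

theorem coKleisli_cartesian_closed (K : Type*) [Field K] [Fintype K]
    (A B C : Type*) [AddCommGroup A] [Module K A] [FiniteDimensional K A]
    [AddCommGroup B] [Module K B] [FiniteDimensional K B]
    [AddCommGroup C] [Module K C] [FiniteDimensional K C] :
    ∃ e : (((A × B) →₀ K) →ₗ[K] C) ≃ₗ[K] ((A →₀ K) →ₗ[K] ((B →₀ K) →ₗ[K] C)),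
      ∀ (f : ((A × B) →₀ K) →ₗ[K] C) (u : A) (v : B),
        e f (Finsupp.single u 1) (Finsupp.single v 1) = f (Finsupp.single (u, v) 1) := by
  refine ⟨(Finsupp.llift C K K (A × B)).symm ≪≫ₗ LinearEquiv.curry K C A B ≪≫ₗ
      ((LinearEquiv.piCongrRight fun _ : A => Finsupp.llift C K K B :
        (A → (B → C)) ≃ₗ[K] (A → ((B →₀ K) →ₗ[K] C)))) ≪≫ₗ
      Finsupp.llift ((B →₀ K) →ₗ[K] C) K K A, ?_⟩
  intro f u v
  simp [Finsupp.llift, LinearEquiv.curry]
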